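/- Let n ≥ r+3 and r ≥ 1. The eigenvalues of the adjacency matrix of S_{n,r} are: 0 with multiplicity r−1, −1 with multiplicity n−r−2, and the three distinct real roots λ_1, λ_2, λ_3 of the cubic equation λ³ − (n−r−2)λ² − (n−1)λ + r(n−r−2) = 0, each of these three roots being a simple eigenvalue. -/

import Mathlib

open Matrix

/-- `sGraph n r` is the graph `S_{n,r}` obtained from the complete graph `K_{n-r}` by
attaching `r` pendant edges at one of its vertices.  The pendant vertices are
`0, …, r-1` (i.e. `v_1, …, v_r`), the vertex of degree `n-1` is `r` (i.e. `v_{r+1}`),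
and the remaining clique vertices are `r+1, …, n-1` (i.e. `v_{r+2}, …, v_n`). -/
def sGraph (n r : ℕ) : SimpleGraph (Fin n) where
  Adj i j := i ≠ j ∧ ((i : ℕ) = r ∨ (j : ℕ) = r ∨ (r < (i : ℕ) ∧ r < (j : ℕ)))
  symm := by
    constructor
    intro i j h
    exact ⟨h.1.symm, by tauto⟩
  loopless := by
    constructor
    intro i h
    exact h.1 rfl

instance sGraphDecidable (n r : ℕ) : DecidableRel (sGraph n r).Adj :=
  fun _ _ => inferInstanceAs (Decidable (_ ∧ _))

section Auxiliary
open Finset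
lemma eig_iff {n r : ℕ} (hn : r + 3 ≤ n) {v : Fin n} (hv : (v : ℕ) = r)
    (μ : ℝ) (x : Fin n → ℝ) :
    Matrix.toLin' ((sGraph n r).adjMatrix ℝ) x = μ • x ↔
      ((∀ i : Fin n, (i : ℕ) < r → x v = μ * x i) ∧
       ((∑ j, x j) - x v = μ * x v) ∧
       (∀ i : Fin n, r < (i : ℕ) →
         x v + (∑ j ∈ Finset.univ.filter (fun j : Fin n => r < (j : ℕ)), x j) - x i = μ * x i)) := by
  rw [Matrix.toLin'_apply, funext_iff]
  have key : ∀ i : Fin n, ((sGraph n r).adjMatrix ℝ *ᵥ x) i =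
      if (i : ℕ) < r then x v else if (i : ℕ) = r then (∑ j, x j) - x i
      else x v + (∑ j ∈ Finset.univ.filter (fun j : Fin n => r < (j : ℕ)), x j) - x i := by
    intro i
    rw [SimpleGraph.adjMatrix_mulVec_apply]
    rcases lt_trichotomy (i : ℕ) r with hi | hi | hi
    · rw [if_pos hi]
      have : (sGraph n r).neighborFinset i = {v} := by
        ext j
        simp only [SimpleGraph.mem_neighborFinset, Finset.mem_singleton]
        simp only [sGraph]
        constructor
        · rintro ⟨h1, h2 | h2 | h2⟩ <;> [omega; exact Fin.ext (by omega); omega]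
        · rintro rfl
          exact ⟨by intro h; rw [h] at hi; omega, Or.inr (Or.inl hv)⟩
      rw [this, Finset.sum_singleton]
    · rw [if_neg (by omega), if_pos hi]
      have hiv : i = v := Fin.ext (by omega)
      have : (sGraph n r).neighborFinset i = Finset.univ.erase i := by
        ext j
        simp only [SimpleGraph.mem_neighborFinset, Finset.mem_erase, Finset.mem_univ, and_true]
        simp only [sGraph]
        constructor
        · rintro ⟨h1, _⟩; exact fun h => h1 h.symm
        · intro h; exact ⟨fun h' => h h'.symm, Or.inl hi⟩
      rw [this, Finset.sum_erase_eq_sub (Finset.mem_univ i)]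
    · rw [if_neg (by omega), if_neg (by omega)]
      have : (sGraph n r).neighborFinset i =
          insert v ((Finset.univ.filter (fun j : Fin n => r < (j : ℕ))).erase i) := by
        ext j
        simp only [SimpleGraph.mem_neighborFinset, Finset.mem_insert, Finset.mem_erase,
          Finset.mem_filter, Finset.mem_univ, true_and]
        simp only [sGraph]
        constructor
        · rintro ⟨h1, h2 | h2 | h2⟩
          · omega
          · exact Or.inl (Fin.ext (by omega))
          · exact Or.inr ⟨fun h => h1 h.symm, h2.2⟩
        · rintro (rfl | ⟨h1, h2⟩)
          · exact ⟨by intro h; rw [h] at hi; omega, Or.inr (Or.inl hv)⟩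
          · exact ⟨fun h => h1 h.symm, Or.inr (Or.inr ⟨hi, h2⟩)⟩
      rw [this, Finset.sum_insert (by simp [hv]),
        Finset.sum_erase_eq_sub (by simp [hi])]
      ring
  constructor
  · intro h
    refine ⟨fun i hi => ?_, ?_, fun i hi => ?_⟩
    · have := h i; rw [key i, if_pos hi] at this; simpa using this
    · have := h v; rw [key v, if_neg (by omega), if_pos hv] at this; simpa using this
    · have := h i; rw [key i, if_neg (by omega), if_neg (by omega)] at this; simpa using this
  · rintro ⟨h1, h2, h3⟩ i
    rw [key i]
    rcases lt_trichotomy (i : ℕ) r with hi | hi | hi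
    · rw [if_pos hi]; simpa using h1 i hi
    · rw [if_neg (by omega), if_pos hi]
      have : i = v := Fin.ext (by omega)
      subst this; simpa using h2
    · rw [if_neg (by omega), if_neg (by omega)]; simpa using h3 i hi

lemma card_flt {n r : ℕ} (hrn : r ≤ n) :
    (Finset.univ.filter (fun j : Fin n => (j : ℕ) < r)).card = r := by
  rw [Finset.card_filter, Fin.sum_univ_eq_sum_range (fun i => if i < r then (1:ℕ) else 0) n,
    ← Finset.card_filter]
  have : (Finset.range n).filter (fun i => i < r) = Finset.range r := by
    ext i; simp; omega
  rw [this, Finset.card_range]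

lemma card_fgt {n r : ℕ} (hrn : r < n) :
    (Finset.univ.filter (fun j : Fin n => r < (j : ℕ))).card = n - r - 1 := by
  rw [Finset.card_filter, Fin.sum_univ_eq_sum_range (fun i => if r < i then (1:ℕ) else 0) n,
    ← Finset.card_filter]
  have : (Finset.range n).filter (fun i => r < i) = Finset.Ico (r+1) n := by
    ext i; simp; omega
  rw [this, Nat.card_Ico]
  omega

lemma sum_split {n r : ℕ} (hrn : r < n) {v : Fin n} (hv : (v : ℕ) = r) (x : Fin n → ℝ) :
    ∑ j, x j = (∑ j ∈ Finset.univ.filter (fun j : Fin n => (j : ℕ) < r), x j) + x v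
      + ∑ j ∈ Finset.univ.filter (fun j : Fin n => r < (j : ℕ)), x j := by
  have : Finset.univ.filter (fun j : Fin n => ¬ (j : ℕ) < r) =
      insert v (Finset.univ.filter (fun j : Fin n => r < (j : ℕ))) := by
    ext j
    simp only [Finset.mem_filter, Finset.mem_univ, true_and, Finset.mem_insert, not_lt]
    constructor
    · intro h
      rcases eq_or_lt_of_le h with h' | h'
      · exact Or.inl (Fin.ext (by omega))
      · exact Or.inr h'
    · rintro (rfl | h) <;> omega
  rw [← Finset.sum_filter_add_sum_filter_not Finset.univ (fun j : Fin n => (j:ℕ) < r) x,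
    this, Finset.sum_insert (by simp [hv])]
  ring

lemma dim0 {n r : ℕ} (hr : 1 ≤ r) (hn : r + 3 ≤ n) :
    Module.finrank ℝ
      (Module.End.eigenspace (Matrix.toLin' ((sGraph n r).adjMatrix ℝ)) 0) = r - 1 := by
  have hrn : r < n := by omega
  set v : Fin n := ⟨r, hrn⟩ with hvdef
  have hv : (v : ℕ) = r := rfl
  set E := Module.End.eigenspace (Matrix.toLin' ((sGraph n r).adjMatrix ℝ)) (0:ℝ) with hE
  have memE : ∀ x : Fin n → ℝ, x ∈ E ↔
      ((∀ i : Fin n, (i : ℕ) < r → x v = 0 * x i) ∧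
       ((∑ j, x j) - x v = 0 * x v) ∧
       (∀ i : Fin n, r < (i : ℕ) →
         x v + (∑ j ∈ Finset.univ.filter (fun j : Fin n => r < (j : ℕ)), x j) - x i = 0 * x i)) :=
    fun x => Iff.trans Module.End.mem_eigenspace_iff
      (by rw [show ((0:ℝ) • x) = (fun i => 0 * x i) from rfl]; exact eig_iff hn hv 0 x)
  let emb : Fin (r-1) → Fin n := fun k => ⟨k, by omega⟩
  let φ : E →ₗ[ℝ] (Fin (r-1) → ℝ) :=
    { toFun := fun x k => (x : Fin n → ℝ) (emb k),
      map_add' := fun x y => rfl,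
      map_smul' := fun c x => rfl }
  have hinj : ∀ x : E, φ x = 0 → x = 0 := by
    rintro ⟨x, hxE⟩ hx
    obtain ⟨h1, h2, h3⟩ := (memE x).mp hxE
    have hx' : ∀ j : Fin n, (j : ℕ) < r - 1 → x j = 0 := by
      intro j hj
      have := congrFun hx ⟨j, hj⟩
      simpa [φ, emb] using this
    have hv0 : x v = 0 := by
      have := h1 ⟨0, by omega⟩ (by show 0 < r; omega)
      simpa using this
    have hgt : ∀ j : Fin n, r < (j : ℕ) →
        x j = ∑ j ∈ Finset.univ.filter (fun j : Fin n => r < (j : ℕ)), x j := by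
      intro j hj
      have := h3 j hj
      rw [hv0] at this
      linarith [this]
    have hT0 : ∑ j ∈ Finset.univ.filter (fun j : Fin n => r < (j : ℕ)), x j = 0 := by
      set T := ∑ j ∈ Finset.univ.filter (fun j : Fin n => r < (j : ℕ)), x j with hT
      have h4 : T = (Finset.univ.filter (fun j : Fin n => r < (j : ℕ))).card • T := by
        conv_lhs => rw [hT]
        rw [Finset.sum_congr rfl (fun j hj => hgt j (by simpa using hj)), Finset.sum_const]
      rw [card_fgt hrn, nsmul_eq_mul] at h4
      have hc : (2:ℝ) ≤ ((n - r - 1 : ℕ) : ℝ) := by exact_mod_cast (by omega : 2 ≤ n - r - 1)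
      have h5 : (((n - r - 1:ℕ):ℝ) - 1) * T = 0 := by linarith
      rcases mul_eq_zero.mp h5 with h | h
      · linarith
      · exact h
    have hlast : x ⟨r - 1, by omega⟩ = 0 := by
      have hsum0 : ∑ j, x j = 0 := by linarith [h2, hv0, zero_mul (x v)]
      rw [sum_split hrn hv x, hv0, hT0] at hsum0
      have : ∑ j ∈ Finset.univ.filter (fun j : Fin n => (j : ℕ) < r), x j
          = x ⟨r - 1, by omega⟩ := by
        apply Finset.sum_eq_single_of_mem
        · simp only [Finset.mem_filter, Finset.mem_univ, true_and]
          show r - 1 < r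
          omega
        · intro j hj hne
          apply hx'
          simp only [Finset.mem_filter, Finset.mem_univ, true_and] at hj
          have : (j : ℕ) ≠ r - 1 := fun h => hne (Fin.ext h)
          omega
      rw [this] at hsum0
      linarith
    apply Subtype.ext
    funext i
    show x i = 0
    rcases lt_trichotomy (i : ℕ) r with hi | hi | hi
    · rcases Nat.lt_or_ge (i : ℕ) (r-1) with h' | h'
      · exact hx' i h'
      · have : i = ⟨r - 1, by omega⟩ := Fin.ext (by simp; omega)
        rw [this]; exact hlast
    · have : i = v := Fin.ext (by simp [hv]; omega)
      rw [this]; exact hv0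
    · rw [hgt i hi, hT0]
  have hsurj : Function.Surjective φ := by
    intro y
    set g : ℕ → ℝ := fun i => if h : i < r - 1 then y ⟨i, h⟩
      else if i = r - 1 then -∑ k, y k else 0 with hg
    set x : Fin n → ℝ := fun j => g j with hxdef
    have hxv : x v = 0 := by
      simp only [hxdef, hg, hv]
      rw [dif_neg (by omega), if_neg (by omega)]
    have hgt0 : ∀ j : Fin n, r < (j : ℕ) → x j = 0 := by
      intro j hj
      simp only [hxdef, hg]
      rw [dif_neg (by omega), if_neg (by omega)]
    have hT0 : ∑ j ∈ Finset.univ.filter (fun j : Fin n => r < (j : ℕ)), x j = 0 :=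
      Finset.sum_eq_zero (fun j hj => hgt0 j (by simpa using hj))
    have hlt : ∑ j ∈ Finset.univ.filter (fun j : Fin n => (j : ℕ) < r), x j = 0 := by
      have e1 : ∑ j ∈ Finset.univ.filter (fun j : Fin n => (j : ℕ) < r), x j
          = ∑ i ∈ Finset.range r, g i := by
        rw [Finset.sum_filter]
        rw [Fin.sum_univ_eq_sum_range (fun i => if i < r then g i else 0) n]
        rw [← Finset.sum_filter]
        congr 1
        ext i; simp; omega
      rw [e1, show r = (r-1)+1 by omega, Finset.sum_range_succ]
      have e2 : ∑ i ∈ Finset.range (r-1), g i = ∑ k, y k := by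
        rw [← Fin.sum_univ_eq_sum_range g (r-1)]
        apply Finset.sum_congr rfl
        intro k _
        simp only [hg]
        rw [dif_pos k.isLt]
      have e3 : g (r-1) = -∑ k, y k := by
        simp only [hg]
        rw [dif_neg (by omega)]
        simp
      rw [e2, e3]; ring
    have hmem : x ∈ E := by
      rw [memE]
      refine ⟨fun i hi => by rw [hxv]; ring, ?_, fun i hi => ?_⟩
      · rw [sum_split hrn hv x, hxv, hT0, hlt]; ring
      · rw [hxv, hT0, hgt0 i hi]; ring
    refine ⟨⟨x, hmem⟩, ?_⟩
    funext k
    show x (emb k) = y k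
    simp only [hxdef, hg, emb]
    rw [dif_pos k.isLt]
  have hbij : Function.Bijective φ := by
    constructor
    · rw [← LinearMap.ker_eq_bot, LinearMap.ker_eq_bot']
      exact hinj
    · exact hsurj
  rw [LinearEquiv.finrank_eq (LinearEquiv.ofBijective φ hbij), Module.finrank_fin_fun]

lemma dimneg1 {n r : ℕ} (hr : 1 ≤ r) (hn : r + 3 ≤ n) :
    Module.finrank ℝ
      (Module.End.eigenspace (Matrix.toLin' ((sGraph n r).adjMatrix ℝ)) (-1)) = n - r - 2 := by
  have hrn : r < n := by omega
  set v : Fin n := ⟨r, hrn⟩ with hvdef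
  have hv : (v : ℕ) = r := rfl
  set E := Module.End.eigenspace (Matrix.toLin' ((sGraph n r).adjMatrix ℝ)) (-1:ℝ) with hE
  have memE : ∀ x : Fin n → ℝ, x ∈ E ↔
      ((∀ i : Fin n, (i : ℕ) < r → x v = -1 * x i) ∧
       ((∑ j, x j) - x v = -1 * x v) ∧
       (∀ i : Fin n, r < (i : ℕ) →
         x v + (∑ j ∈ Finset.univ.filter (fun j : Fin n => r < (j : ℕ)), x j) - x i
           = -1 * x i)) :=
    fun x => Iff.trans Module.End.mem_eigenspace_iff
      (by rw [show ((-1:ℝ) • x) = (fun i => -1 * x i) from rfl]; exact eig_iff hn hv (-1) x)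
  have hrcast : ((r:ℕ):ℝ) ≥ 1 := by exact_mod_cast hr
  let emb : Fin (n-r-2) → Fin n := fun k => ⟨r+1+k, by omega⟩
  let φ : E →ₗ[ℝ] (Fin (n-r-2) → ℝ) :=
    { toFun := fun x k => (x : Fin n → ℝ) (emb k),
      map_add' := fun x y => rfl,
      map_smul' := fun c x => rfl }
  have hinj : ∀ x : E, φ x = 0 → x = 0 := by
    rintro ⟨x, hxE⟩ hx
    obtain ⟨h1, h2, h3⟩ := (memE x).mp hxE
    have hx' : ∀ j : Fin n, r < (j : ℕ) → (j : ℕ) < n - 1 → x j = 0 := by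
      intro j hj hj'
      have he : emb ⟨(j : ℕ) - (r+1), by omega⟩ = j := Fin.ext (by simp [emb]; omega)
      have h0 : x (emb ⟨(j : ℕ) - (r+1), by omega⟩) = 0 := congrFun hx _
      rwa [he] at h0
    set T := ∑ j ∈ Finset.univ.filter (fun j : Fin n => r < (j : ℕ)), x j with hT
    have hvT : x v + T = 0 := by
      have := h3 ⟨r+1, by omega⟩ (by exact Nat.lt_succ_self r)
      linarith
    have hlt : ∀ i : Fin n, (i : ℕ) < r → x i = -x v := fun i hi => by
      have := h1 i hi; linarith
    have hv0 : x v = 0 := by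
      have hsum0 : ∑ j, x j = 0 := by linarith [h2]
      rw [sum_split hrn hv x] at hsum0
      have hP : ∑ j ∈ Finset.univ.filter (fun j : Fin n => (j : ℕ) < r), x j
          = (r:ℝ) * (-x v) := by
        rw [Finset.sum_congr rfl (fun j hj => hlt j (by simpa using hj)), Finset.sum_const,
          card_flt (by omega), nsmul_eq_mul]
      rw [hP] at hsum0
      have : (r:ℝ) * x v = 0 := by linarith
      rcases mul_eq_zero.mp this with h | h
      · linarith
      · exact h
    have hT0 : T = 0 := by linarith
    have hlast : x ⟨n - 1, by omega⟩ = 0 := by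
      have : T = x ⟨n - 1, by omega⟩ := by
        rw [hT]
        apply Finset.sum_eq_single_of_mem
        · simp only [Finset.mem_filter, Finset.mem_univ, true_and]
          show r < n - 1
          omega
        · intro j hj hne
          simp only [Finset.mem_filter, Finset.mem_univ, true_and] at hj
          have : (j : ℕ) ≠ n - 1 := fun h => hne (Fin.ext h)
          exact hx' j hj (by omega)
      rw [← this, hT0]
    apply Subtype.ext
    funext i
    show x i = 0
    rcases lt_trichotomy (i : ℕ) r with hi | hi | hi
    · rw [hlt i hi, hv0]; ring
    · have : i = v := Fin.ext hi
      rw [this]; exact hv0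
    · rcases Nat.lt_or_ge (i : ℕ) (n-1) with h' | h'
      · exact hx' i hi h'
      · have : i = ⟨n - 1, by omega⟩ := Fin.ext (by show (i:ℕ) = n - 1; omega)
        rw [this]; exact hlast
  have hsurj : Function.Surjective φ := by
    intro y
    set g : ℕ → ℝ := fun i => if h : r < i ∧ i < n - 1 then y ⟨i - (r+1), by omega⟩
      else if i = n - 1 then -∑ k, y k else 0 with hg
    set x : Fin n → ℝ := fun j => g j with hxdef
    have hxv : x v = 0 := by
      simp only [hxdef, hg, hv]
      rw [dif_neg (by omega), if_neg (by omega)]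
    have hlt0 : ∀ j : Fin n, (j : ℕ) < r → x j = 0 := by
      intro j hj
      simp only [hxdef, hg]
      rw [dif_neg (by omega), if_neg (by omega)]
    have hP0 : ∑ j ∈ Finset.univ.filter (fun j : Fin n => (j : ℕ) < r), x j = 0 :=
      Finset.sum_eq_zero (fun j hj => hlt0 j (by simpa using hj))
    have hT0 : ∑ j ∈ Finset.univ.filter (fun j : Fin n => r < (j : ℕ)), x j = 0 := by
      have e1 : ∑ j ∈ Finset.univ.filter (fun j : Fin n => r < (j : ℕ)), x j
          = ∑ i ∈ Finset.Ico (r+1) n, g i := by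
        rw [Finset.sum_filter]
        rw [Fin.sum_univ_eq_sum_range (fun i => if r < i then g i else 0) n]
        rw [← Finset.sum_filter]
        congr 1
        ext i; simp; omega
      have e2 : ∑ i ∈ Finset.Ico (r+1) (n-1), g i + ∑ i ∈ Finset.Ico (n-1) n, g i
          = ∑ i ∈ Finset.Ico (r+1) n, g i :=
        Finset.sum_Ico_consecutive g (by omega) (by omega)
      have e3 : ∑ i ∈ Finset.Ico (n-1) n, g i = g (n-1) := by
        rw [show n = (n-1)+1 by omega, Finset.sum_Ico_succ_top (by omega), show (n-1+1)-1 = n-1 by omega]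
        rw [Finset.Ico_self, Finset.sum_empty, zero_add]
      have e4 : ∑ i ∈ Finset.Ico (r+1) (n-1), g i = ∑ k, y k := by
        rw [Finset.sum_Ico_eq_sum_range]
        rw [← Fin.sum_univ_eq_sum_range (fun i => g (r+1+i)) (n-1-(r+1))]
        have hcard : n-1-(r+1) = n-r-2 := by omega
        rw [show (∑ i : Fin (n-1-(r+1)), g (r+1+(i:ℕ))) = ∑ i : Fin (n-r-2), g (r+1+(i:ℕ)) by
          congr 1 <;> rw [hcard]]
        apply Finset.sum_congr rfl
        intro k _
        simp only [hg]
        rw [dif_pos ⟨by omega, by omega⟩]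
        congr 1
        exact Fin.ext (by simp)
      have e5 : g (n-1) = -∑ k, y k := by
        simp only [hg]
        rw [dif_neg (by omega)]
        simp
      rw [e1, ← e2, e3, e4, e5]; ring
    have hmem : x ∈ E := by
      rw [memE]
      refine ⟨fun i hi => by rw [hxv, hlt0 i hi]; ring, ?_, fun i hi => ?_⟩
      · rw [sum_split hrn hv x, hxv, hT0, hP0]; ring
      · rw [hxv, hT0]; ring
    refine ⟨⟨x, hmem⟩, ?_⟩
    funext k
    show x (emb k) = y k
    simp only [hxdef, hg, emb]
    rw [dif_pos ⟨by omega, by omega⟩]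
    congr 1
    exact Fin.ext (by simp)
  have hbij : Function.Bijective φ := by
    constructor
    · rw [← LinearMap.ker_eq_bot, LinearMap.ker_eq_bot']
      exact hinj
    · exact hsurj
  rw [LinearEquiv.finrank_eq (LinearEquiv.ofBijective φ hbij), Module.finrank_fin_fun]

/-- Any root of a monic cubic with three distinct given roots equals one of them. -/
lemma cubic_only_roots {A B C l1 l2 l3 x : ℝ} (h12 : l1 ≠ l2) (h13 : l1 ≠ l3) (h23 : l2 ≠ l3)
    (e1 : l1^3 - A*l1^2 - B*l1 + C = 0) (e2 : l2^3 - A*l2^2 - B*l2 + C = 0)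
    (e3 : l3^3 - A*l3^2 - B*l3 + C = 0)
    (ex : x^3 - A*x^2 - B*x + C = 0) : x = l1 ∨ x = l2 ∨ x = l3 := by
  have q12 : l1^2 + l1*l2 + l2^2 - A*(l1+l2) - B = 0 := by
    have h : (l1 - l2) * (l1^2 + l1*l2 + l2^2 - A*(l1+l2) - B) = 0 := by
      linear_combination e1 - e2
    exact (mul_eq_zero.mp h).resolve_left (sub_ne_zero.mpr h12)
  have q13 : l1^2 + l1*l3 + l3^2 - A*(l1+l3) - B = 0 := by
    have h : (l1 - l3) * (l1^2 + l1*l3 + l3^2 - A*(l1+l3) - B) = 0 := by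
      linear_combination e1 - e3
    exact (mul_eq_zero.mp h).resolve_left (sub_ne_zero.mpr h13)
  have hs : A = l1 + l2 + l3 := by
    have h : (l2 - l3) * (l1 + l2 + l3 - A) = 0 := by
      linear_combination q12 - q13
    have := (mul_eq_zero.mp h).resolve_left (sub_ne_zero.mpr h23)
    linarith [sub_eq_zero.mp this]
  have hB : B = -(l1*l2 + l1*l3 + l2*l3) := by linear_combination -q12 - (l1+l2)*hs
  have hC : C = -(l1*l2*l3) := by linear_combination e1 + l1^2*hs + l1*hB
  have key : (x - l1) * (x - l2) * (x - l3) = 0 := by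
    linear_combination ex + x^2*hs + x*hB - hC
  rcases mul_eq_zero.mp key with h | h
  · rcases mul_eq_zero.mp h with h | h
    · exact Or.inl (by linarith [sub_eq_zero.mp h])
    · exact Or.inr (Or.inl (by linarith [sub_eq_zero.mp h]))
  · exact Or.inr (Or.inr (by linarith [sub_eq_zero.mp h]))

/-- existence of three ordered roots -/
lemma cubic_exists_roots {n r : ℕ} (hr : 1 ≤ r) (hn : r + 3 ≤ n) :
    ∃ l1 l2 l3 : ℝ, l1 < l2 ∧ l2 < l3 ∧
      (∀ l ∈ [l1, l2, l3], l^3 - ((n:ℝ)-r-2)*l^2 - ((n:ℝ)-1)*l + r*((n:ℝ)-r-2) = 0) := by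
  set A : ℝ := (n:ℝ)-r-2 with hA
  set B : ℝ := (n:ℝ)-1 with hB
  set C : ℝ := r*((n:ℝ)-r-2) with hC
  have hrR : (1:ℝ) ≤ r := by exact_mod_cast hr
  have hnR : (r:ℝ) + 3 ≤ n := by exact_mod_cast hn
  set f : ℝ → ℝ := fun t => t^3 - A*t^2 - B*t + C with hf
  have hcont : Continuous f := by fun_prop
  have hfm1 : 0 < f (-1) := by simp only [hf, hA, hB, hC]; nlinarith
  have hf0 : 0 < f 0 := by simp only [hf, hA, hB, hC]; nlinarith
  have hfA : f A < 0 := by simp only [hf, hA, hB, hC]; nlinarith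
  have hfnn : f (-(n:ℝ)) < 0 := by simp only [hf, hA, hB, hC]; nlinarith
  have hfn : 0 < f (n:ℝ) := by simp only [hf, hA, hB, hC]; nlinarith
  have hA1 : (1:ℝ) ≤ A := by simp only [hA]; linarith
  obtain ⟨l1, hl1m, hl1⟩ := intermediate_value_Icc (by linarith : -(n:ℝ) ≤ -1)
    hcont.continuousOn ⟨le_of_lt hfnn, le_of_lt hfm1⟩
  obtain ⟨l2, hl2m, hl2⟩ := intermediate_value_Icc' (by linarith : (0:ℝ) ≤ A)
    hcont.continuousOn ⟨le_of_lt hfA, le_of_lt hf0⟩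
  obtain ⟨l3, hl3m, hl3⟩ := intermediate_value_Icc (by linarith : A ≤ (n:ℝ))
    hcont.continuousOn ⟨le_of_lt hfA, le_of_lt hfn⟩
  refine ⟨l1, l2, l3, ?_, ?_, ?_⟩
  · have h20 : (0:ℝ) ≠ l2 := by rintro h; rw [← h] at hl2; linarith
    have := lt_of_le_of_ne hl2m.1 h20
    linarith [hl1m.2]
  · have h2A : l2 ≠ A := by rintro h; rw [h] at hl2; linarith
    have := lt_of_le_of_ne hl2m.2 h2A
    linarith [hl3m.1]
  · intro l hl
    simp only [List.mem_cons, List.not_mem_nil, or_false] at hl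
    rcases hl with rfl | rfl | rfl
    · exact hl1
    · exact hl2
    · exact hl3

/-- roots avoid the special values 0, -1, A -/
lemma cubic_root_ne {n r : ℕ} (hr : 1 ≤ r) (hn : r + 3 ≤ n) {l : ℝ}
    (hl : l^3 - ((n:ℝ)-r-2)*l^2 - ((n:ℝ)-1)*l + r*((n:ℝ)-r-2) = 0) :
    l ≠ 0 ∧ l ≠ -1 ∧ l ≠ (n:ℝ)-r-2 := by
  have hrR : (1:ℝ) ≤ r := by exact_mod_cast hr
  have hnR : (r:ℝ) + 3 ≤ n := by exact_mod_cast hn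
  refine ⟨?_, ?_, ?_⟩
  · rintro rfl; nlinarith
  · rintro rfl; nlinarith
  · rintro rfl; nlinarith

lemma dimlam {n r : ℕ} (hr : 1 ≤ r) (hn : r + 3 ≤ n) {l : ℝ}
    (hl : l^3 - ((n:ℝ)-r-2)*l^2 - ((n:ℝ)-1)*l + r*((n:ℝ)-r-2) = 0) :
    Module.finrank ℝ
      (Module.End.eigenspace (Matrix.toLin' ((sGraph n r).adjMatrix ℝ)) l) = 1 := by
  obtain ⟨hl0, hlm1, hlM⟩ := cubic_root_ne hr hn hl
  have hrn : r < n := by omega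
  set v : Fin n := ⟨r, hrn⟩ with hvdef
  have hv : (v : ℕ) = r := rfl
  set E := Module.End.eigenspace (Matrix.toLin' ((sGraph n r).adjMatrix ℝ)) l with hE
  have memE : ∀ x : Fin n → ℝ, x ∈ E ↔
      ((∀ i : Fin n, (i : ℕ) < r → x v = l * x i) ∧
       ((∑ j, x j) - x v = l * x v) ∧
       (∀ i : Fin n, r < (i : ℕ) →
         x v + (∑ j ∈ Finset.univ.filter (fun j : Fin n => r < (j : ℕ)), x j) - x i
           = l * x i)) :=
    fun x => Iff.trans Module.End.mem_eigenspace_iff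
      (by rw [show (l • x) = (fun i => l * x i) from rfl]; exact eig_iff hn hv l x)
  have hcast : ((n - r - 1 : ℕ) : ℝ) = (n:ℝ) - r - 1 := by
    rw [Nat.sub_sub, Nat.cast_sub (by omega), Nat.cast_add, Nat.cast_one]
    ring
  have hrcast : (1:ℝ) ≤ (r:ℝ) := by exact_mod_cast hr
  let φ : E →ₗ[ℝ] ℝ :=
    { toFun := fun x => (x : Fin n → ℝ) v,
      map_add' := fun x y => rfl,
      map_smul' := fun c x => rfl }
  have hinj : ∀ x : E, φ x = 0 → x = 0 := by
    rintro ⟨x, hxE⟩ hx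
    obtain ⟨h1, h2, h3⟩ := (memE x).mp hxE
    have hv0 : x v = 0 := hx
    set T := ∑ j ∈ Finset.univ.filter (fun j : Fin n => r < (j : ℕ)), x j with hT
    have hgt : ∀ i : Fin n, r < (i : ℕ) → (l + 1) * x i = T := by
      intro i hi
      have := h3 i hi
      rw [hv0] at this
      linarith
    have hTeq : (l + 1) * T = ((n:ℝ) - r - 1) * T := by
      rw [← hcast]
      calc (l + 1) * T = ∑ j ∈ Finset.univ.filter (fun j : Fin n => r < (j : ℕ)),
            (l + 1) * x j := by rw [Finset.mul_sum]
        _ = ∑ j ∈ Finset.univ.filter (fun j : Fin n => r < (j : ℕ)), T :=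
            Finset.sum_congr rfl (fun j hj => hgt j (by simpa using hj))
        _ = ((n - r - 1 : ℕ) : ℝ) * T := by
            rw [Finset.sum_const, card_fgt hrn, nsmul_eq_mul]
    have hT0 : T = 0 := by
      have h5 : (l - ((n:ℝ) - r - 2)) * T = 0 := by linear_combination hTeq
      exact (mul_eq_zero.mp h5).resolve_left (sub_ne_zero.mpr hlM)
    apply Subtype.ext
    funext i
    show x i = 0
    rcases lt_trichotomy (i : ℕ) r with hi | hi | hi
    · have := h1 i hi
      rw [hv0] at this
      exact ((mul_eq_zero.mp this.symm).resolve_left hl0)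
    · have : i = v := Fin.ext hi
      rw [this]; exact hv0
    · have := hgt i hi
      rw [hT0] at this
      have hl1 : l + 1 ≠ 0 := fun h => hlm1 (by linarith)
      exact (mul_eq_zero.mp this).resolve_left hl1
  have hsurj : Function.Surjective φ := by
    intro c
    set M : ℝ := (n:ℝ) - r - 2 with hM
    set x : Fin n → ℝ := fun j => if (j : ℕ) < r then c/l
      else if (j : ℕ) = r then c else c/(l - M) with hxdef
    have hxv : x v = c := by
      simp only [hxdef, hv]
      rw [if_neg (by omega)]
      simp
    have hgt : ∀ j : Fin n, r < (j : ℕ) → x j = c/(l - M) := by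
      intro j hj
      simp only [hxdef]
      rw [if_neg (by omega), if_neg (by omega)]
    have hltx : ∀ j : Fin n, (j : ℕ) < r → x j = c/l := by
      intro j hj
      simp only [hxdef]
      rw [if_pos hj]
    have hT : ∑ j ∈ Finset.univ.filter (fun j : Fin n => r < (j : ℕ)), x j
        = ((n:ℝ) - r - 1) * (c/(l - M)) := by
      rw [Finset.sum_congr rfl (fun j hj => hgt j (by simpa using hj)), Finset.sum_const,
        card_fgt hrn, nsmul_eq_mul, hcast]
    have hP : ∑ j ∈ Finset.univ.filter (fun j : Fin n => (j : ℕ) < r), x j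
        = (r:ℝ) * (c/l) := by
      rw [Finset.sum_congr rfl (fun j hj => hltx j (by simpa using hj)), Finset.sum_const,
        card_flt (by omega), nsmul_eq_mul]
    have hlM' : l - M ≠ 0 := sub_ne_zero.mpr hlM
    have hmem : x ∈ E := by
      rw [memE]
      refine ⟨fun i hi => ?_, ?_, fun i hi => ?_⟩
      · rw [hxv, hltx i hi]
        field_simp
      · rw [sum_split hrn hv x, hxv, hT, hP]
        have hM' : M = (n:ℝ) - r - 2 := hM
        field_simp
        linear_combination (-c) * hl
      · rw [hxv, hT, hgt i hi]
        have hM' : M = (n:ℝ) - r - 2 := hM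
        field_simp
        ring
    exact ⟨⟨x, hmem⟩, hxv⟩
  have hbij : Function.Bijective φ := by
    constructor
    · rw [← LinearMap.ker_eq_bot, LinearMap.ker_eq_bot']
      exact hinj
    · exact hsurj
  rw [LinearEquiv.finrank_eq (LinearEquiv.ofBijective φ hbij), Module.finrank_self]

lemma eig_complete {n r : ℕ} (hr : 1 ≤ r) (hn : r + 3 ≤ n) {μ : ℝ}
    (hμ : Module.End.HasEigenvalue (Matrix.toLin' ((sGraph n r).adjMatrix ℝ)) μ)
    (h0 : μ ≠ 0) (h1' : μ ≠ -1) :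
    μ^3 - ((n:ℝ)-r-2)*μ^2 - ((n:ℝ)-1)*μ + r*((n:ℝ)-r-2) = 0 := by
  have hrn : r < n := by omega
  set v : Fin n := ⟨r, hrn⟩ with hvdef
  have hv : (v : ℕ) = r := rfl
  obtain ⟨x, hx⟩ := hμ.exists_hasEigenvector
  have hxne : x ≠ 0 := hx.right
  obtain ⟨h1, h2, h3⟩ := (eig_iff hn hv μ x).mp hx.apply_eq_smul
  have hcast : ((n - r - 1 : ℕ) : ℝ) = (n:ℝ) - r - 1 := by
    rw [Nat.sub_sub, Nat.cast_sub (by omega), Nat.cast_add, Nat.cast_one]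
    ring
  set T := ∑ j ∈ Finset.univ.filter (fun j : Fin n => r < (j : ℕ)), x j with hT
  set P := ∑ j ∈ Finset.univ.filter (fun j : Fin n => (j : ℕ) < r), x j with hP
  have eqA : ∀ i : Fin n, r < (i : ℕ) → (μ + 1) * x i = x v + T := by
    intro i hi
    have := h3 i hi
    linarith
  have eq1 : (μ + 1) * T = ((n:ℝ) - r - 1) * (x v + T) := by
    rw [← hcast]
    calc (μ + 1) * T = ∑ j ∈ Finset.univ.filter (fun j : Fin n => r < (j : ℕ)),
          (μ + 1) * x j := by rw [hT, Finset.mul_sum]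
      _ = ∑ j ∈ Finset.univ.filter (fun j : Fin n => r < (j : ℕ)), (x v + T) :=
          Finset.sum_congr rfl (fun j hj => eqA j (by simpa using hj))
      _ = ((n - r - 1 : ℕ) : ℝ) * (x v + T) := by
          rw [Finset.sum_const, card_fgt hrn, nsmul_eq_mul]
  have eqP : (r:ℝ) * x v = μ * P := by
    calc (r:ℝ) * x v = ∑ j ∈ Finset.univ.filter (fun j : Fin n => (j : ℕ) < r), x v := by
          rw [Finset.sum_const, card_flt (by omega), nsmul_eq_mul]
      _ = ∑ j ∈ Finset.univ.filter (fun j : Fin n => (j : ℕ) < r), μ * x j :=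
          Finset.sum_congr rfl (fun j hj => h1 j (by simpa using hj))
      _ = μ * P := by rw [hP, Finset.mul_sum]
  have eq2 : P + T = μ * x v := by
    have := h2
    rw [sum_split hrn hv x, ← hT, ← hP] at this
    linarith
  have eq2' : (r:ℝ) * x v + μ * T = μ^2 * x v := by linear_combination eqP + μ * eq2
  have key : (μ^3 - ((n:ℝ)-r-2)*μ^2 - ((n:ℝ)-1)*μ + r*((n:ℝ)-r-2)) * x v = 0 := by
    linear_combination μ * eq1 - (μ - ((n:ℝ)-r-2)) * eq2'
  by_cases hxv : x v = 0
  · exfalso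
    apply hxne
    have hT0 : T = 0 := by
      have : μ * T = 0 := by rw [hxv] at eq2'; linarith
      exact (mul_eq_zero.mp this).resolve_left h0
    have hμ1 : μ + 1 ≠ 0 := fun h => h1' (by linarith)
    funext i
    show x i = 0
    rcases lt_trichotomy (i : ℕ) r with hi | hi | hi
    · have := h1 i hi
      rw [hxv] at this
      exact (mul_eq_zero.mp this.symm).resolve_left h0
    · have : i = v := Fin.ext hi
      rw [this]; exact hxv
    · have := eqA i hi
      rw [hxv, hT0] at this
      simpa using (mul_eq_zero.mp (by linarith : (μ+1) * x i = 0)).resolve_left hμ1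
  · exact (mul_eq_zero.mp key).resolve_right hxv

end Auxiliary

/-- For `n ≥ r + 3` and `r ≥ 1` the eigenvalues of the adjacency matrix of
`S_{n,r}` are `0` with multiplicity `r - 1`, `-1` with multiplicity `n - r - 2`, and the
three distinct real roots of `λ³ - (n-r-2)λ² - (n-1)λ + r(n-r-2) = 0`, each simple. -/
theorem stmt2 {n r : ℕ} (hr : 1 ≤ r) (hn : r + 3 ≤ n) :
    ∃ lam : Fin 3 → ℝ, Function.Injective lam ∧
      (∀ i, (lam i) ^ 3 - ((n : ℝ) - r - 2) * (lam i) ^ 2 - ((n : ℝ) - 1) * lam i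
        + r * ((n : ℝ) - r - 2) = 0) ∧
      (∀ x : ℝ, x ^ 3 - ((n : ℝ) - r - 2) * x ^ 2 - ((n : ℝ) - 1) * x
        + r * ((n : ℝ) - r - 2) = 0 → ∃ i, x = lam i) ∧
      Module.finrank ℝ
        (Module.End.eigenspace (Matrix.toLin' ((sGraph n r).adjMatrix ℝ)) 0) = r - 1 ∧
      Module.finrank ℝ
        (Module.End.eigenspace (Matrix.toLin' ((sGraph n r).adjMatrix ℝ)) (-1)) = n - r - 2 ∧
      (∀ i, Module.finrank ℝ
        (Module.End.eigenspace (Matrix.toLin' ((sGraph n r).adjMatrix ℝ)) (lam i)) = 1) ∧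
      (∀ μ : ℝ, Module.End.HasEigenvalue (Matrix.toLin' ((sGraph n r).adjMatrix ℝ)) μ →
        μ = 0 ∨ μ = -1 ∨ ∃ i, μ = lam i) := by
  obtain ⟨l1, l2, l3, h12, h23, hroots⟩ := cubic_exists_roots hr hn
  have e1 := hroots l1 (by simp)
  have e2 := hroots l2 (by simp)
  have e3 := hroots l3 (by simp)
  have hne12 : l1 ≠ l2 := ne_of_lt h12
  have hne23 : l2 ≠ l3 := ne_of_lt h23
  have hne13 : l1 ≠ l3 := ne_of_lt (h12.trans h23)
  refine ⟨![l1, l2, l3], ?_, ?_, ?_, dim0 hr hn, dimneg1 hr hn, ?_, ?_⟩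
  · intro a b hab
    fin_cases a <;> fin_cases b <;> simp_all <;> linarith
  · intro i
    fin_cases i
    · simpa using e1
    · simpa using e2
    · simpa using e3
  · intro x hx
    rcases cubic_only_roots (A := (n:ℝ)-r-2) (B := (n:ℝ)-1) (C := (r:ℝ)*((n:ℝ)-r-2))
      hne12 hne13 hne23 e1 e2 e3 hx with h | h | h
    · exact ⟨0, by simpa using h⟩
    · exact ⟨1, by simpa using h⟩
    · exact ⟨2, by simpa using h⟩
  · intro i
    fin_cases i
    · exact dimlam hr hn (by simpa using e1)
    · exact dimlam hr hn (by simpa using e2)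
    · exact dimlam hr hn (by simpa using e3)
  · intro μ hμ
    by_cases hμ0 : μ = 0
    · exact Or.inl hμ0
    by_cases hμ1 : μ = -1
    · exact Or.inr (Or.inl hμ1)
    refine Or.inr (Or.inr ?_)
    have hcub := eig_complete hr hn hμ hμ0 hμ1
    rcases cubic_only_roots (A := (n:ℝ)-r-2) (B := (n:ℝ)-1) (C := (r:ℝ)*((n:ℝ)-r-2))
      hne12 hne13 hne23 e1 e2 e3 hcub with h | h | h
    · exact ⟨0, by simpa using h⟩
    · exact ⟨1, by simpa using h⟩
    · exact ⟨2, by simpa using h⟩
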